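/- Let 𝕊, 𝕋 be algebraic theories with free algebra monads S, T, let λ : ST ⇒ TS be a distributive law, and let 𝕌^λ be the theory with signature Σ_𝕊 ⊎ Σ_𝕋 and equations E_𝕊 ∪ E_𝕋 ∪ E_λ. Then any two separated terms that are 𝕌^λ-equal are equal modulo (𝕊,𝕋): if t[s_x/x] =_{𝕌^λ} t'[s'_y/y] then [t[[s_x]_𝕊/x]]_𝕋 = [t'[[s'_y]_𝕊/y]]_𝕋 in TS𝒱. -/
import Mathlib


/-! ## Algebraic signatures, terms and equational logic -/

/-- An algebraic signature: a set of operation symbols with arities. -/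
structure Sgn where
  ops : Type
  ar : ops → ℕ

/-- Terms over a signature `σ` with variables in `X`. -/
inductive Trm (σ : Sgn) (X : Type) : Type
  | var : X → Trm σ X
  | op : (f : σ.ops) → (Fin (σ.ar f) → Trm σ X) → Trm σ X

/-- Simultaneous substitution. -/
def Trm.bind {σ : Sgn} {X Y : Type} : Trm σ X → (X → Trm σ Y) → Trm σ Y
  | .var x, g => g x
  | .op f k, g => .op f fun i => (k i).bind g

/-- Renaming of variables. -/
def Trm.rename {σ : Sgn} {X Y : Type} (f : X → Y) (t : Trm σ X) : Trm σ Y :=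
  t.bind fun x => .var (f x)

/-- Equations over `σ`: pairs of terms over the fixed countable set `ℕ` of variables. -/
abbrev Eqn (σ : Sgn) := Trm σ ℕ × Trm σ ℕ

/-- Derivability in equational logic from the set of axioms `E`
(axioms, reflexivity, symmetry, transitivity, congruence, substitution). -/
inductive Deriv {σ : Sgn} (E : Set (Eqn σ)) : {X : Type} → Trm σ X → Trm σ X → Prop
  | ax {X : Type} {e : Eqn σ} (he : e ∈ E) (g : ℕ → Trm σ X) :
      Deriv E (e.1.bind g) (e.2.bind g)
  | refl {X : Type} (t : Trm σ X) : Deriv E t t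
  | symm {X : Type} {s t : Trm σ X} : Deriv E s t → Deriv E t s
  | trans {X : Type} {s t u : Trm σ X} : Deriv E s t → Deriv E t u → Deriv E s u
  | congr {X : Type} (f : σ.ops) {k k' : Fin (σ.ar f) → Trm σ X} :
      (∀ i, Deriv E (k i) (k' i)) → Deriv E (.op f k) (.op f k')
  | subst {X Y : Type} {s t : Trm σ X} (g : X → Trm σ Y) :
      Deriv E s t → Deriv E (s.bind g) (t.bind g)

/-- An algebraic theory: a signature together with a set of equations. -/
structure Thy where
  sig : Sgn
  eqns : Set (Eqn sig)

/-! ## The free algebra monad -/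

/-- Carrier of the free algebra monad: terms modulo derivable equality. -/
def FreeM (σ : Sgn) (E : Set (Eqn σ)) (X : Type) : Type :=
  Quot (fun s t : Trm σ X => Deriv E s t)

/-- Equivalence class of a term. -/
def FreeM.mk {σ : Sgn} {E : Set (Eqn σ)} {X : Type} (t : Trm σ X) : FreeM σ E X :=
  Quot.mk _ t

/-- Functorial action of the free algebra monad. -/
noncomputable def FreeM.map {σ : Sgn} {E : Set (Eqn σ)} {X Y : Type}
    (f : X → Y) (q : FreeM σ E X) : FreeM σ E Y :=
  FreeM.mk ((Quot.out q).rename f)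

/-- Unit of the free algebra monad. -/
def FreeM.unit {σ : Sgn} {E : Set (Eqn σ)} {X : Type} (x : X) : FreeM σ E X :=
  FreeM.mk (.var x)

/-- Multiplication of the free algebra monad (flattening). -/
noncomputable def FreeM.mul {σ : Sgn} {E : Set (Eqn σ)} {X : Type}
    (q : FreeM σ E (FreeM σ E X)) : FreeM σ E X :=
  FreeM.mk ((Quot.out q).bind fun c => Quot.out c)

/-! ## Disjoint union of signatures and separated terms -/

/-- Disjoint union of two signatures. -/
def Sgn.sum (σ τ : Sgn) : Sgn := ⟨σ.ops ⊕ τ.ops, Sum.elim σ.ar τ.ar⟩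

/-- Embedding of `σ`-terms into terms over the sum signature. -/
def Trm.inl {σ τ : Sgn} {X : Type} : Trm σ X → Trm (σ.sum τ) X
  | .var x => .var x
  | .op f k => .op (Sum.inl f) fun i => (k i).inl

/-- Embedding of `τ`-terms into terms over the sum signature. -/
def Trm.inr {σ τ : Sgn} {X : Type} : Trm τ X → Trm (σ.sum τ) X
  | .var x => .var x
  | .op f k => .op (Sum.inr f) fun i => (k i).inr

/-- Flattening of a separated term `t[s_x/x]` (`τ`-term over `σ`-terms)
into a term over the sum signature. -/
def sepTS {σ τ : Sgn} {X : Type} (t : Trm τ (Trm σ X)) : Trm (σ.sum τ) X :=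
  (Trm.inr t).bind fun s => Trm.inl s

/-- Flattening of a mixed term `s[t_x/x]` (`σ`-term over `τ`-terms)
into a term over the sum signature. -/
def sepST {σ τ : Sgn} {X : Type} (s : Trm σ (Trm τ X)) : Trm (σ.sum τ) X :=
  (Trm.inl s).bind fun t => Trm.inr t

/-- The element `[t[[s_x]_𝕊/x]]_𝕋` of `TSX` determined by a separated term. -/
def clTS (SS TT : Thy) {X : Type} (t : Trm TT.sig (Trm SS.sig X)) :
    FreeM TT.sig TT.eqns (FreeM SS.sig SS.eqns X) :=
  FreeM.mk (t.rename FreeM.mk)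

/-- The element `[s[[t_x]_𝕋/x]]_𝕊` of `STX` determined by a mixed term. -/
def clST (SS TT : Thy) {X : Type} (s : Trm SS.sig (Trm TT.sig X)) :
    FreeM SS.sig SS.eqns (FreeM TT.sig TT.eqns X) :=
  FreeM.mk (s.rename FreeM.mk)

/-! ## Composite theories -/

/-- A composite theory of `TT` after `SS`: a theory on the disjoint union
of the signatures, containing both sets of equations, in which every term
has a separation, and separations are essentially unique. -/
structure Composite (SS TT : Thy) where
  eqns : Set (Eqn (SS.sig.sum TT.sig))
  containsS : ∀ e ∈ SS.eqns, ((Trm.inl e.1 : Trm (SS.sig.sum TT.sig) ℕ), Trm.inl e.2) ∈ eqns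
  containsT : ∀ e ∈ TT.eqns, ((Trm.inr e.1 : Trm (SS.sig.sum TT.sig) ℕ), Trm.inr e.2) ∈ eqns
  sepExists : ∀ u : Trm (SS.sig.sum TT.sig) ℕ,
      ∃ t : Trm TT.sig (Trm SS.sig ℕ), Deriv eqns u (sepTS t)
  sepUnique : ∀ t t' : Trm TT.sig (Trm SS.sig ℕ),
      Deriv eqns (sepTS t) (sepTS t') → clTS SS TT t = clTS SS TT t'

/-! ## Distributive laws between free algebra monads -/

/-- A distributive law `λ : ST ⇒ TS` between the free algebra monads of `SS` and `TT`. -/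
structure DistLaw (SS TT : Thy) where
  app : ∀ X : Type, FreeM SS.sig SS.eqns (FreeM TT.sig TT.eqns X) →
      FreeM TT.sig TT.eqns (FreeM SS.sig SS.eqns X)
  natural : ∀ (X Y : Type) (f : X → Y)
      (q : FreeM SS.sig SS.eqns (FreeM TT.sig TT.eqns X)),
      app Y (FreeM.map (FreeM.map f) q) = FreeM.map (FreeM.map f) (app X q)
  unitS : ∀ (X : Type) (q : FreeM TT.sig TT.eqns X),
      app X (FreeM.unit q) = FreeM.map FreeM.unit q
  unitT : ∀ (X : Type) (q : FreeM SS.sig SS.eqns X),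
      app X (FreeM.map FreeM.unit q) = FreeM.unit q
  mulS : ∀ (X : Type)
      (q : FreeM SS.sig SS.eqns (FreeM SS.sig SS.eqns (FreeM TT.sig TT.eqns X))),
      app X (FreeM.mul q) =
        FreeM.map FreeM.mul (app (FreeM SS.sig SS.eqns X) (FreeM.map (app X) q))
  mulT : ∀ (X : Type)
      (q : FreeM SS.sig SS.eqns (FreeM TT.sig TT.eqns (FreeM TT.sig TT.eqns X))),
      app X (FreeM.map FreeM.mul q) =
        FreeM.mul (FreeM.map (app X) (app (FreeM TT.sig TT.eqns X) q))

/-! ## The theory `𝕌^λ` obtained from a distributive law -/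

/-- The set `E_λ` of all equations between mixed terms and separated terms
that are related by the distributive law `λ`. -/
def Elam (SS TT : Thy) (d : DistLaw SS TT) : Set (Eqn (SS.sig.sum TT.sig)) :=
  { e | ∃ (s : Trm SS.sig (Trm TT.sig ℕ)) (t : Trm TT.sig (Trm SS.sig ℕ)),
      e = (sepST s, sepTS t) ∧ d.app ℕ (clST SS TT s) = clTS SS TT t }

/-- The equations of `𝕊`, embedded into the sum signature. -/
def embedS (SS TT : Thy) : Set (Eqn (SS.sig.sum TT.sig)) :=
  { e | ∃ e₀ ∈ SS.eqns, e = (Trm.inl e₀.1, Trm.inl e₀.2) }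

/-- The equations of `𝕋`, embedded into the sum signature. -/
def embedT (SS TT : Thy) : Set (Eqn (SS.sig.sum TT.sig)) :=
  { e | ∃ e₀ ∈ TT.eqns, e = (Trm.inr e₀.1, Trm.inr e₀.2) }

/-- The equations `E_𝕊 ∪ E_𝕋 ∪ E_λ` of the theory `𝕌^λ`. -/
def EUlam (SS TT : Thy) (d : DistLaw SS TT) : Set (Eqn (SS.sig.sum TT.sig)) :=
  embedS SS TT ∪ embedT SS TT ∪ Elam SS TT d

/-! ### Auxiliary development for the proof -/

theorem Trm.bind_bind' {σ : Sgn} {X Y Z : Type} (t : Trm σ X) (g : X → Trm σ Y)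
    (h : Y → Trm σ Z) : (t.bind g).bind h = t.bind fun x => (g x).bind h := by
  induction t with
  | var x => rfl
  | op f k ih => exact congrArg _ (funext fun i => ih i)

theorem Trm.bind_var' {σ : Sgn} {X : Type} (t : Trm σ X) :
    (t.bind fun x => Trm.var x) = t := by
  induction t with
  | var x => rfl
  | op f k ih => exact congrArg _ (funext fun i => ih i)

theorem Trm.rename_bind' {σ : Sgn} {X Y Z : Type} (t : Trm σ X) (f : X → Y)
    (g : Y → Trm σ Z) : (t.rename f).bind g = t.bind fun x => g (f x) :=
  Trm.bind_bind' t _ g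

theorem Trm.bind_rename' {σ : Sgn} {X Y Z : Type} (t : Trm σ X) (g : X → Trm σ Y)
    (f : Y → Z) : (t.bind g).rename f = t.bind fun x => (g x).rename f :=
  Trm.bind_bind' t g _

theorem Trm.rename_rename' {σ : Sgn} {X Y Z : Type} (t : Trm σ X) (f : X → Y)
    (g : Y → Z) : (t.rename f).rename g = t.rename fun x => g (f x) :=
  Trm.bind_bind' t _ _

/-- `Deriv`-derivable equality from quotient equality. -/
theorem deriv_of_mk_eq {σ : Sgn} {E : Set (Eqn σ)} {X : Type} {a b : Trm σ X}
    (h : FreeM.mk (E := E) a = FreeM.mk b) : Deriv E a b := by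
  have h' : Relation.EqvGen (fun s t : Trm σ X => Deriv E s t) a b :=
    Quot.eqvGen_exact (show Quot.mk (fun s t : Trm σ X => Deriv E s t) a
      = Quot.mk _ b from h)
  clear h
  induction h' with
  | rel _ _ h => exact h
  | refl => exact Deriv.refl _
  | symm _ _ _ ih => exact ih.symm
  | trans _ _ _ _ _ ih1 ih2 => exact ih1.trans ih2

theorem FreeM.mk_out {σ : Sgn} {E : Set (Eqn σ)} {X : Type} (q : FreeM σ E X) :
    FreeM.mk (Quot.out q) = q := Quot.out_eq q

theorem deriv_out {σ : Sgn} {E : Set (Eqn σ)} {X : Type} (q : FreeM σ E X)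
    (w : Trm σ X) (h : q = FreeM.mk w) : Deriv E (Quot.out q) w :=
  deriv_of_mk_eq (by rw [FreeM.mk_out, h])

theorem deriv_bind_congr {σ : Sgn} {E : Set (Eqn σ)} {X Y : Type} (t : Trm σ X)
    {g g' : X → Trm σ Y} (h : ∀ x, Deriv E (g x) (g' x)) :
    Deriv E (t.bind g) (t.bind g') := by
  induction t with
  | var x => exact h x
  | op f k ih => exact Deriv.congr f fun i => ih i

theorem FreeM.sound {σ : Sgn} {E : Set (Eqn σ)} {X : Type} {a b : Trm σ X}
    (h : Deriv E a b) : FreeM.mk (E := E) a = FreeM.mk b := Quot.sound h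

theorem FreeM.map_mk {σ : Sgn} {E : Set (Eqn σ)} {X Y : Type} (f : X → Y)
    (w : Trm σ X) : FreeM.map (E := E) f (FreeM.mk w) = FreeM.mk (w.rename f) :=
  FreeM.sound (Deriv.subst _ (deriv_out _ w rfl))

theorem FreeM.mul_mk {σ : Sgn} {E : Set (Eqn σ)} {X : Type}
    (w : Trm σ (FreeM σ E X)) :
    FreeM.mul (FreeM.mk w) = FreeM.mk (w.bind fun c => Quot.out c) :=
  FreeM.sound (Deriv.subst _ (deriv_out _ w rfl))

theorem FreeM.map_comp {σ : Sgn} {E : Set (Eqn σ)} {X Y Z : Type} (f : X → Y)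
    (g : Y → Z) (q : FreeM σ E X) :
    FreeM.map g (FreeM.map f q) = FreeM.map (fun x => g (f x)) q := by
  induction q using Quot.inductionOn with
  | h w =>
    show FreeM.map g (FreeM.map f (FreeM.mk w)) = FreeM.map _ (FreeM.mk w)
    rw [FreeM.map_mk, FreeM.map_mk, FreeM.map_mk, Trm.rename_rename']

theorem FreeM.map_congr {σ : Sgn} {E : Set (Eqn σ)} {X Y : Type} {f g : X → Y}
    (h : ∀ x, f x = g x) (q : FreeM σ E X) : FreeM.map f q = FreeM.map g q := by
  rw [funext h]

theorem FreeM.map_id {σ : Sgn} {E : Set (Eqn σ)} {X : Type} (q : FreeM σ E X) :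
    FreeM.map (fun x => x) q = q := by
  induction q using Quot.inductionOn with
  | h w =>
    show FreeM.map _ (FreeM.mk w) = FreeM.mk w
    rw [FreeM.map_mk]
    exact congrArg _ (Trm.bind_var' w)

theorem FreeM.mul_unit {σ : Sgn} {E : Set (Eqn σ)} {X : Type} (q : FreeM σ E X) :
    FreeM.mul (FreeM.unit q) = q := by
  show FreeM.mul (FreeM.mk (.var q)) = q
  rw [FreeM.mul_mk]
  exact FreeM.mk_out q

theorem FreeM.map_unit {σ : Sgn} {E : Set (Eqn σ)} {X Y : Type} (f : X → Y)
    (a : X) : FreeM.map (E := E) f (FreeM.unit a) = FreeM.unit (f a) := by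
  show FreeM.map f (FreeM.mk (.var a)) = _
  rw [FreeM.map_mk]; rfl

theorem FreeM.map_mk_var {σ : Sgn} {E : Set (Eqn σ)} {X Y : Type} (f : X → Y)
    (a : X) : FreeM.map (E := E) f (FreeM.mk (.var a)) = FreeM.mk (.var (f a)) :=
  FreeM.map_unit f a

/-- Naturality of multiplication. -/
theorem FreeM.map_mul_comm {σ : Sgn} {E : Set (Eqn σ)} {X Y : Type} (f : X → Y)
    (q : FreeM σ E (FreeM σ E X)) :
    FreeM.map f (FreeM.mul q) = FreeM.mul (FreeM.map (FreeM.map f) q) := by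
  induction q using Quot.inductionOn with
  | h w =>
    show FreeM.map f (FreeM.mul (FreeM.mk w)) = FreeM.mul (FreeM.map _ (FreeM.mk w))
    rw [FreeM.mul_mk, FreeM.map_mk, FreeM.map_mk, FreeM.mul_mk,
      Trm.bind_rename', Trm.rename_bind']
    refine FreeM.sound (deriv_bind_congr w fun a => (deriv_out _ _ ?_).symm)
    conv_lhs => rw [← FreeM.mk_out a]
    rw [FreeM.map_mk]

/-- Associativity of multiplication. -/
theorem FreeM.mul_assoc {σ : Sgn} {E : Set (Eqn σ)} {X : Type}
    (q : FreeM σ E (FreeM σ E (FreeM σ E X))) :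
    FreeM.mul (FreeM.mul q) = FreeM.mul (FreeM.map FreeM.mul q) := by
  induction q using Quot.inductionOn with
  | h w =>
    show FreeM.mul (FreeM.mul (FreeM.mk w)) = FreeM.mul (FreeM.map _ (FreeM.mk w))
    rw [FreeM.mul_mk, FreeM.mul_mk, FreeM.map_mk, FreeM.mul_mk,
      Trm.bind_bind', Trm.rename_bind']
    refine FreeM.sound (deriv_bind_congr w fun a => (deriv_out _ _ ?_).symm)
    conv_lhs => rw [← FreeM.mk_out a]
    rw [FreeM.mul_mk]

section Dist

variable (SS TT : Thy) (d : DistLaw SS TT)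

/-- Application of a `TT`-operation to elements of `TS X`. -/
noncomputable def opT {X : Type} (f : TT.sig.ops)
    (c : Fin (TT.sig.ar f) → FreeM TT.sig TT.eqns (FreeM SS.sig SS.eqns X)) :
    FreeM TT.sig TT.eqns (FreeM SS.sig SS.eqns X) :=
  FreeM.mk (.op f fun i => Quot.out (c i))

/-- Application of an `SS`-operation to elements of `TS X`, via the
distributive law. -/
noncomputable def opS {X : Type} (f : SS.sig.ops)
    (c : Fin (SS.sig.ar f) → FreeM TT.sig TT.eqns (FreeM SS.sig SS.eqns X)) :
    FreeM TT.sig TT.eqns (FreeM SS.sig SS.eqns X) :=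
  FreeM.map FreeM.mul (d.app _ (FreeM.mk (.op f fun i => .var (c i))))

/-- Normalization of a mixed term into `TSX`. -/
noncomputable def nf {X : Type} : Trm (SS.sig.sum TT.sig) X →
    FreeM TT.sig TT.eqns (FreeM SS.sig SS.eqns X)
  | .var x => FreeM.mk (.var (FreeM.mk (.var x)))
  | .op (Sum.inl f) k => opS SS TT d f fun i => nf (k i)
  | .op (Sum.inr f) k => opT SS TT f fun i => nf (k i)

theorem opT_mk {X : Type} (f : TT.sig.ops)
    (u : Fin (TT.sig.ar f) → Trm TT.sig (FreeM SS.sig SS.eqns X)) :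
    opT SS TT f (fun i => FreeM.mk (u i)) = FreeM.mk (.op f u) :=
  FreeM.sound (Deriv.congr f fun i => deriv_out _ _ rfl)

/-- The Kleisli extension for the composite monad `TS`. -/
noncomputable def tsbind {X Y : Type}
    (q : FreeM TT.sig TT.eqns (FreeM SS.sig SS.eqns X))
    (h : X → FreeM TT.sig TT.eqns (FreeM SS.sig SS.eqns Y)) :
    FreeM TT.sig TT.eqns (FreeM SS.sig SS.eqns Y) :=
  FreeM.mul (FreeM.map
    (fun r => FreeM.map FreeM.mul (d.app _ (FreeM.map h r))) q)

theorem tsbind_unit {X Y : Type} (x : X)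
    (h : X → FreeM TT.sig TT.eqns (FreeM SS.sig SS.eqns Y)) :
    tsbind SS TT d (FreeM.mk (.var (FreeM.mk (.var x)))) h = h x := by
  have e0 : FreeM.mk (E := TT.eqns) (.var (FreeM.mk (E := SS.eqns) (.var x)))
      = FreeM.unit (FreeM.unit x) := rfl
  rw [e0]
  unfold tsbind
  rw [FreeM.map_unit, FreeM.mul_unit, FreeM.map_unit, d.unitS, FreeM.map_comp,
    FreeM.map_congr (fun a => FreeM.mul_unit a), FreeM.map_id]

theorem tsbind_mk {X Y : Type} (w : Trm TT.sig (FreeM SS.sig SS.eqns X))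
    (h : X → FreeM TT.sig TT.eqns (FreeM SS.sig SS.eqns Y)) :
    tsbind SS TT d (FreeM.mk w) h
      = FreeM.mk (w.bind fun b =>
          Quot.out (FreeM.map FreeM.mul (d.app _ (FreeM.map h b)))) := by
  unfold tsbind
  rw [FreeM.map_mk, FreeM.mul_mk, Trm.rename_bind']

theorem tsbind_opT {X Y : Type} (f : TT.sig.ops)
    (c : Fin (TT.sig.ar f) → FreeM TT.sig TT.eqns (FreeM SS.sig SS.eqns X))
    (h : X → FreeM TT.sig TT.eqns (FreeM SS.sig SS.eqns Y)) :
    tsbind SS TT d (opT SS TT f c) h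
      = opT SS TT f fun i => tsbind SS TT d (c i) h := by
  have hpt : ∀ a, tsbind SS TT d a h
      = FreeM.mk ((Quot.out a).bind fun b =>
          Quot.out (FreeM.map FreeM.mul (d.app _ (FreeM.map h b)))) := by
    intro a
    conv_lhs => rw [← FreeM.mk_out a]
    exact tsbind_mk SS TT d _ h
  rw [show opT SS TT f c = FreeM.mk (.op f fun i => Quot.out (c i)) from rfl,
    tsbind_mk]
  refine FreeM.sound (Deriv.congr f fun i => (deriv_out _ _ ?_).symm)
  exact hpt (c i)

/-- Key lemma: `tsbind` commutes with the `S`-structure induced by the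
distributive law. Uses all the distributive law axioms. -/
theorem tsbind_lift {X Y : Type}
    (p : FreeM SS.sig SS.eqns (FreeM TT.sig TT.eqns (FreeM SS.sig SS.eqns X)))
    (h : X → FreeM TT.sig TT.eqns (FreeM SS.sig SS.eqns Y)) :
    tsbind SS TT d (FreeM.map FreeM.mul (d.app _ p)) h
      = FreeM.map FreeM.mul (d.app _ (FreeM.map (fun q => tsbind SS TT d q h) p)) := by
  set F : FreeM SS.sig SS.eqns X → FreeM TT.sig TT.eqns (FreeM SS.sig SS.eqns Y) :=
    fun r => FreeM.map FreeM.mul (d.app _ (FreeM.map h r)) with hF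
  have key : ∀ r : FreeM SS.sig SS.eqns (FreeM SS.sig SS.eqns X),
      F (FreeM.mul r) = FreeM.map FreeM.mul (d.app _ (FreeM.map F r)) := by
    intro r
    have k1 : F (FreeM.mul r)
        = FreeM.map FreeM.mul (d.app _ (FreeM.mul (FreeM.map (FreeM.map h) r))) := by
      rw [hF]
      exact congrArg _ (congrArg _ (FreeM.map_mul_comm h r))
    have k2 : d.app _ (FreeM.mul (FreeM.map (FreeM.map h) r))
        = FreeM.map FreeM.mul
            (d.app _ (FreeM.map (fun x => d.app _ (FreeM.map h x)) r)) := by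
      rw [d.mulS, FreeM.map_comp]
    have k3 : FreeM.map FreeM.mul (FreeM.map FreeM.mul
          (d.app _ (FreeM.map (fun x => d.app _ (FreeM.map h x)) r)))
        = FreeM.map FreeM.mul (FreeM.map (FreeM.map FreeM.mul)
            (d.app _ (FreeM.map (fun x => d.app _ (FreeM.map h x)) r))) := by
      rw [FreeM.map_comp, FreeM.map_comp]
      exact FreeM.map_congr (fun a => FreeM.mul_assoc a) _
    have k4 : FreeM.map (FreeM.map FreeM.mul)
          (d.app _ (FreeM.map (fun x => d.app _ (FreeM.map h x)) r))
        = d.app _ (FreeM.map (FreeM.map FreeM.mul)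
            (FreeM.map (fun x => d.app _ (FreeM.map h x)) r)) :=
      (d.natural _ _ FreeM.mul _).symm
    have k5 : FreeM.map (FreeM.map FreeM.mul)
          (FreeM.map (fun x => d.app _ (FreeM.map h x)) r) = FreeM.map F r := by
      rw [FreeM.map_comp, hF]
    rw [k1, k2, k3, k4, k5]
  set z := FreeM.map (FreeM.map F) p with hz
  have l1 : tsbind SS TT d (FreeM.map FreeM.mul (d.app _ p)) h
      = FreeM.mul (FreeM.map (fun r => F (FreeM.mul r)) (d.app _ p)) := by
    unfold tsbind
    rw [FreeM.map_comp]
  have l2 : FreeM.map (fun r => F (FreeM.mul r)) (d.app _ p)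
      = FreeM.map (FreeM.map FreeM.mul)
          (FreeM.map (d.app _) (FreeM.map (FreeM.map F) (d.app _ p))) := by
    rw [FreeM.map_comp, FreeM.map_comp]
    exact FreeM.map_congr key _
  have l3 : FreeM.map (FreeM.map F) (d.app _ p) = d.app _ z := by
    rw [hz]
    exact (d.natural _ _ F p).symm
  have r1 : FreeM.map (fun q => tsbind SS TT d q h) p = FreeM.map FreeM.mul z := by
    rw [hz, FreeM.map_comp]
    rfl
  have r2 : d.app _ (FreeM.map FreeM.mul z)
      = FreeM.mul (FreeM.map (d.app _) (d.app _ z)) := d.mulT _ z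
  have r3 : FreeM.map FreeM.mul (FreeM.mul (FreeM.map (d.app _) (d.app _ z)))
      = FreeM.mul (FreeM.map (FreeM.map FreeM.mul)
          (FreeM.map (d.app _) (d.app _ z))) :=
    FreeM.map_mul_comm _ _
  rw [l1, l2, l3, r1, r2, r3]

theorem tsbind_opS {X Y : Type} (f : SS.sig.ops)
    (c : Fin (SS.sig.ar f) → FreeM TT.sig TT.eqns (FreeM SS.sig SS.eqns X))
    (h : X → FreeM TT.sig TT.eqns (FreeM SS.sig SS.eqns Y)) :
    tsbind SS TT d (opS SS TT d f c) h
      = opS SS TT d f fun i => tsbind SS TT d (c i) h := by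
  unfold opS
  rw [tsbind_lift, FreeM.map_mk]
  rfl

/-! Normal forms of embedded and separated terms. -/

theorem nf_inl {X : Type} (s : Trm SS.sig X) :
    nf SS TT d (Trm.inl s) = FreeM.mk (.var (FreeM.mk s)) := by
  induction s with
  | var x => rfl
  | op f k ih =>
    show opS SS TT d f (fun i => nf SS TT d (Trm.inl (k i))) = _
    rw [funext ih]
    unfold opS
    have e1 : (FreeM.mk (E := SS.eqns)
        (Trm.op f fun i => .var (FreeM.mk (E := TT.eqns)
          (.var (FreeM.mk (E := SS.eqns) (k i))))))
        = FreeM.map FreeM.unit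
            (FreeM.mk (E := SS.eqns)
              (Trm.op f fun i => .var (FreeM.mk (E := SS.eqns) (k i)))) := by
      rw [FreeM.map_mk]; rfl
    rw [e1, d.unitT]
    rw [show (FreeM.unit (FreeM.mk (E := SS.eqns)
        (Trm.op f fun i => .var (FreeM.mk (E := SS.eqns) (k i)))))
      = FreeM.mk (E := TT.eqns) (.var (FreeM.mk (E := SS.eqns)
          (Trm.op f fun i => .var (FreeM.mk (E := SS.eqns) (k i)))))
      from rfl]
    rw [FreeM.map_mk_var, FreeM.mul_mk]
    exact congrArg (fun q => FreeM.mk (E := TT.eqns) (.var q))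
      (FreeM.sound (Deriv.congr f fun i => deriv_out _ _ rfl))

theorem nf_inr {X : Type} (t : Trm TT.sig X) :
    nf SS TT d (Trm.inr t)
      = FreeM.mk (t.rename fun x => FreeM.mk (.var x)) := by
  induction t with
  | var x => rfl
  | op f k ih =>
    show opT SS TT f (fun i => nf SS TT d (Trm.inr (k i))) = _
    rw [funext ih, opT_mk]
    rfl

theorem nf_sepTS {X : Type} (t : Trm TT.sig (Trm SS.sig X)) :
    nf SS TT d (sepTS t) = clTS SS TT t := by
  induction t with
  | var s =>
    rw [show sepTS (τ := TT.sig) (Trm.var s) = Trm.inl s from rfl, nf_inl]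
    rfl
  | op f k ih =>
    have h1 : nf SS TT d (sepTS (Trm.op f k))
        = opT SS TT f fun i => nf SS TT d (sepTS (k i)) := rfl
    rw [h1, funext ih]
    exact opT_mk SS TT f fun i => (k i).rename FreeM.mk

theorem nf_sepST {X : Type} (s : Trm SS.sig (Trm TT.sig X)) :
    nf SS TT d (sepST s) = d.app X (clST SS TT s) := by
  induction s with
  | var t =>
    rw [show sepST (σ := SS.sig) (Trm.var t) = Trm.inr t from rfl, nf_inr]
    rw [show clST SS TT (Trm.var t) = FreeM.unit (FreeM.mk t) from rfl]
    rw [d.unitS, FreeM.map_mk]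
    rfl
  | op f k ih =>
    have h1 : nf SS TT d (sepST (Trm.op f k))
        = opS SS TT d f fun i => nf SS TT d (sepST (k i)) := rfl
    rw [h1, funext ih]
    set q : FreeM SS.sig SS.eqns (FreeM SS.sig SS.eqns (FreeM TT.sig TT.eqns X)) :=
      FreeM.mk (Trm.op f fun i => .var (clST SS TT (k i))) with hq
    have e1 : FreeM.mul q = clST SS TT (Trm.op f k) := by
      rw [hq, FreeM.mul_mk]
      exact FreeM.sound (Deriv.congr f fun i => deriv_out _ _ rfl)
    have e2 : FreeM.map (d.app X) q
        = FreeM.mk (Trm.op f fun i => .var (d.app X (clST SS TT (k i)))) := by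
      rw [hq, FreeM.map_mk]; rfl
    have e3 := d.mulS X q
    rw [e1, e2] at e3
    rw [e3]
    rfl

/-- The substitution lemma for `nf`. -/
theorem nf_bind {X Y : Type} (u : Trm (SS.sig.sum TT.sig) X)
    (g : X → Trm (SS.sig.sum TT.sig) Y) :
    nf SS TT d (u.bind g)
      = tsbind SS TT d (nf SS TT d u) fun x => nf SS TT d (g x) := by
  induction u with
  | var x => exact (tsbind_unit SS TT d x fun x => nf SS TT d (g x)).symm
  | op f k ih =>
    cases f with
    | inl f =>
      refine Eq.trans (congrArg (opS SS TT d f) (funext fun i => ih i)) ?_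
      exact (tsbind_opS SS TT d f (fun i => nf SS TT d (k i)) _).symm
    | inr f =>
      refine Eq.trans (congrArg (opT SS TT f) (funext fun i => ih i)) ?_
      exact (tsbind_opT SS TT d f (fun i => nf SS TT d (k i)) _).symm

/-- `nf` is invariant under `𝕌^λ`-derivable equality. -/
theorem nf_deriv {X : Type} {u v : Trm (SS.sig.sum TT.sig) X}
    (hd : Deriv (EUlam SS TT d) u v) : nf SS TT d u = nf SS TT d v := by
  induction hd with
  | ax he g =>
    rcases he with (⟨e0, he0, hee⟩ | ⟨e0, he0, hee⟩) | ⟨s, t, hee, hlam⟩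
    · rw [hee]
      show nf SS TT d ((Trm.inl e0.1).bind g) = nf SS TT d ((Trm.inl e0.2).bind g)
      rw [nf_bind, nf_bind, nf_inl, nf_inl]
      have h12 : Deriv SS.eqns e0.1 e0.2 := by
        have := Deriv.ax he0 (fun n => Trm.var n)
        rwa [Trm.bind_var', Trm.bind_var'] at this
      rw [FreeM.sound h12]
    · rw [hee]
      show nf SS TT d ((Trm.inr e0.1).bind g) = nf SS TT d ((Trm.inr e0.2).bind g)
      rw [nf_bind, nf_bind, nf_inr, nf_inr]
      have h12 : Deriv TT.eqns e0.1 e0.2 := by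
        have := Deriv.ax he0 (fun n => Trm.var n)
        rwa [Trm.bind_var', Trm.bind_var'] at this
      have h13 : FreeM.mk (E := TT.eqns)
          (e0.1.rename fun x => FreeM.mk (E := SS.eqns) (.var x))
          = FreeM.mk (e0.2.rename fun x => FreeM.mk (E := SS.eqns) (.var x)) :=
        FreeM.sound (Deriv.subst _ h12)
      rw [h13]
    · rw [hee]
      show nf SS TT d ((sepST s).bind g) = nf SS TT d ((sepTS t).bind g)
      rw [nf_bind, nf_bind, nf_sepST, nf_sepTS, hlam]
  | refl t => rfl
  | symm _ ih => exact ih.symm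
  | trans _ _ ih1 ih2 => exact ih1.trans ih2
  | congr f hk ih =>
    cases f with
    | inl f => exact congrArg (opS SS TT d f) (funext fun i => ih i)
    | inr f => exact congrArg (opT SS TT f) (funext fun i => ih i)
  | subst g _ ih => rw [nf_bind, nf_bind, ih]

end Dist

/-! ## Statement 9: 𝕌^λ-equal separated terms are equal modulo `(𝕊,𝕋)` -/

/-- Any two separated terms that are `𝕌^λ`-equal are equal modulo `(𝕊,𝕋)`:
if `t[s_x/x] =_{𝕌^λ} t'[s'_y/y]` then `[t[[s_x]_𝕊/x]]_𝕋 = [t'[[s'_y]_𝕊/y]]_𝕋`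
in `TS𝒱`. -/
theorem Ulam_equal_separated_implies_equal_modulo_ST (SS TT : Thy) (d : DistLaw SS TT)
    (t t' : Trm TT.sig (Trm SS.sig ℕ))
    (h : Deriv (EUlam SS TT d) (sepTS t) (sepTS t')) :
    clTS SS TT t = clTS SS TT t' := by
  have h1 := nf_deriv SS TT d h
  rwa [nf_sepTS, nf_sepTS] at h1
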